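/- Let C_0 be the set of all symmetric k×k matrices with entries in {-1,1}. For permutations π, π' of [k] and B ∈ C_0, let B^{π,π'} be the matrix with entries B^{π,π'}_{ab} = B_{π(a)π'(b)}. Then for all k large enough, there exists a subset C of C_0 with log|C| ≥ k²/32 such that ‖B₁ - B₂^{π,π'}‖_F² ≥ k²/2 for all permutations π, π' and all distinct B₁, B₂ ∈ C. -/

import Mathlib

open Finset


/-- Entropy-type bound on partial binomial sums, radius ≤ N/4. -/
lemma aux_binom_sum (N r : ℕ) (hr : (r : ℝ) ≤ (N : ℝ) / 4) :
    (∑ i ∈ range (r + 1), ((N.choose i : ℝ))) ≤ (4 / 3) ^ N * (3 : ℝ) ^ ((N : ℝ) / 4) := by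
  have hrN : r ≤ N := by
    have : (r : ℝ) ≤ (N : ℝ) := by nlinarith [Nat.cast_nonneg (α := ℝ) N]
    exact_mod_cast this
  -- key: ∑_{i ≤ N} choose N i (1/4)^i (3/4)^{N-i} = 1
  have hbin : (∑ i ∈ range (N + 1),
      (1 / 4 : ℝ) ^ i * (3 / 4) ^ (N - i) * (N.choose i)) = 1 := by
    have := add_pow (1 / 4 : ℝ) (3 / 4) N
    norm_num at this
    rw [← this]
  -- each term with i ≤ r is at least (3/4)^N * 3^(-(N/4)) * choose
  have hterm : ∀ i ∈ range (r + 1),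
      (3 / 4 : ℝ) ^ N * ((3 : ℝ) ^ ((N : ℝ) / 4))⁻¹ * (N.choose i)
        ≤ (1 / 4 : ℝ) ^ i * (3 / 4) ^ (N - i) * (N.choose i) := by
    intro i hi
    have hi' : i ≤ r := by simpa using Finset.mem_range_succ_iff.mp hi
    have hiN : i ≤ N := le_trans hi' hrN
    have hir : (i : ℝ) ≤ (N : ℝ) / 4 := by
      have : (i : ℝ) ≤ (r : ℝ) := by exact_mod_cast hi'
      linarith
    have h1 : (1 / 4 : ℝ) ^ i * (3 / 4) ^ (N - i) = (3 / 4) ^ N * ((3 : ℝ) ^ i)⁻¹ := by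
      have : (3 / 4 : ℝ) ^ N = (3 / 4) ^ i * (3 / 4) ^ (N - i) := by
        rw [← pow_add]; congr 1; omega
      rw [this, div_pow, div_pow, div_pow, one_pow]
      field_simp
    rw [h1]
    have h2 : ((3 : ℝ) ^ ((N : ℝ) / 4))⁻¹ ≤ ((3 : ℝ) ^ i)⁻¹ := by
      rw [inv_le_inv₀ (by positivity) (by positivity)]
      rw [← Real.rpow_natCast (3 : ℝ) i]
      exact Real.rpow_le_rpow_of_exponent_le (by norm_num) hir
    have := mul_le_mul_of_nonneg_left h2 (by positivity : (0:ℝ) ≤ (3/4:ℝ)^N)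
    exact mul_le_mul_of_nonneg_right this (by positivity)
  have hsub : (∑ i ∈ range (r + 1),
      (3 / 4 : ℝ) ^ N * ((3 : ℝ) ^ ((N : ℝ) / 4))⁻¹ * (N.choose i)) ≤ 1 := by
    calc _ ≤ ∑ i ∈ range (r + 1), (1 / 4 : ℝ) ^ i * (3 / 4) ^ (N - i) * (N.choose i) :=
          Finset.sum_le_sum hterm
      _ ≤ ∑ i ∈ range (N + 1), (1 / 4 : ℝ) ^ i * (3 / 4) ^ (N - i) * (N.choose i) := by
          apply Finset.sum_le_sum_of_subset_of_nonneg
          · exact Finset.range_subset_range.2 (by omega)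
          · intro i _ _; positivity
      _ = 1 := hbin
  rw [← Finset.mul_sum] at hsub
  have hpos : (0:ℝ) < (3 / 4 : ℝ) ^ N * ((3 : ℝ) ^ ((N : ℝ) / 4))⁻¹ := by positivity
  rw [← le_div_iff₀' hpos] at hsub
  calc (∑ i ∈ range (r + 1), ((N.choose i : ℝ))) ≤ _ := hsub
    _ = (4 / 3) ^ N * (3 : ℝ) ^ ((N : ℝ) / 4) := by
        rw [one_div, mul_inv, inv_inv]
        congr 1
        rw [← inv_pow]; norm_num


/-- Number of boolean functions within Hamming distance `r` of `h` is at most the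
partial binomial sum. -/
lemma aux_ball_card {E : Type*} [Fintype E] [DecidableEq E] (h : E → Bool) (r : ℕ) :
    ((univ : Finset (E → Bool)).filter
        (fun g => ((univ : Finset E).filter (fun e => g e ≠ h e)).card ≤ r)).card
      ≤ ∑ i ∈ range (r + 1), (Fintype.card E).choose i := by
  classical
  set T : Finset (Finset E) := (range (r + 1)).biUnion
    (fun i => Finset.powersetCard i (univ : Finset E)) with hT
  have hmap : ∀ g ∈ (univ : Finset (E → Bool)).filter
      (fun g => ((univ : Finset E).filter (fun e => g e ≠ h e)).card ≤ r),
      ((univ : Finset E).filter (fun e => g e ≠ h e)) ∈ T := by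
    intro g hg
    simp only [mem_filter, mem_univ, true_and] at hg
    simp only [hT, mem_biUnion, mem_range, Finset.mem_powersetCard]
    exact ⟨_, by omega, subset_univ _, rfl⟩
  have hinj : ∀ g₁ ∈ (univ : Finset (E → Bool)).filter
      (fun g => ((univ : Finset E).filter (fun e => g e ≠ h e)).card ≤ r),
      ∀ g₂ ∈ (univ : Finset (E → Bool)).filter
      (fun g => ((univ : Finset E).filter (fun e => g e ≠ h e)).card ≤ r),
      ((univ : Finset E).filter (fun e => g₁ e ≠ h e))
        = ((univ : Finset E).filter (fun e => g₂ e ≠ h e)) → g₁ = g₂ := by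
    intro g₁ _ g₂ _ heq
    funext e
    have := Finset.ext_iff.mp heq e
    simp only [mem_filter, mem_univ, true_and] at this
    by_cases h1 : g₁ e = h e <;> by_cases h2 : g₂ e = h e
    · rw [h1, h2]
    · exact absurd (this.mpr h2) (by simp [h1])
    · exact absurd (this.mp h1) (by simp [h2])
    · revert h1 h2; cases g₁ e <;> cases g₂ e <;> cases h e <;> simp
  calc _ ≤ T.card := Finset.card_le_card_of_injOn _ hmap hinj
    _ ≤ ∑ i ∈ range (r + 1), (Finset.powersetCard i (univ : Finset E)).card :=
        Finset.card_biUnion_le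
    _ = ∑ i ∈ range (r + 1), (Fintype.card E).choose i := by
        simp [Finset.card_powersetCard]


variable {k : ℕ}

/-- The ±1 matrix associated with a boolean function on unordered pairs. -/
def auxMat (g : Sym2 (Fin k) → Bool) : Matrix (Fin k) (Fin k) ℝ :=
  Matrix.of fun a b => if g s(a, b) then 1 else -1

/-- Number of disagreeing entries after permuting. -/
def auxCnt (g h : Sym2 (Fin k) → Bool) (π π' : Equiv.Perm (Fin k)) : ℕ :=
  ((univ : Finset (Fin k × Fin k)).filter
    (fun p => g s(p.1, p.2) ≠ h s(π p.1, π' p.2))).card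

lemma auxMat_symm (g : Sym2 (Fin k) → Bool) : (auxMat g).IsSymm := by
  ext a b
  simp only [auxMat, Matrix.transpose_apply, Matrix.of_apply, Sym2.eq_swap]

lemma auxMat_pm (g : Sym2 (Fin k) → Bool) (a b : Fin k) :
    auxMat g a b = 1 ∨ auxMat g a b = -1 := by
  unfold auxMat; by_cases h : g s(a,b) <;> simp [h]

lemma auxMat_inj : Function.Injective (auxMat (k := k)) := by
  intro g h he
  funext e
  induction e using Sym2.ind with
  | _ a b =>
    have := congrFun (congrFun he a) b
    unfold auxMat at this
    simp only [Matrix.of_apply] at this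
    by_cases h1 : g s(a,b) <;> by_cases h2 : h s(a,b) <;>
      simp_all <;> norm_num at this

lemma auxCnt_comm (g h : Sym2 (Fin k) → Bool) (π π' : Equiv.Perm (Fin k)) :
    auxCnt g h π π' = auxCnt h g π⁻¹ π'⁻¹ := by
  unfold auxCnt
  apply Finset.card_bij' (fun p _ => (π p.1, π' p.2)) (fun q _ => (π⁻¹ q.1, π'⁻¹ q.2))
  · intro p hp
    simp only [mem_filter, mem_univ, true_and] at hp ⊢
    simpa using hp.symm
  · intro q hq
    simp only [mem_filter, mem_univ, true_and] at hq ⊢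
    simpa using hq.symm
  · intro p _; simp
  · intro q _; simp

lemma auxSum_eq (g h : Sym2 (Fin k) → Bool) (π π' : Equiv.Perm (Fin k)) :
    ∑ a, ∑ b, (auxMat g a b - auxMat h (π a) (π' b)) ^ 2 = 4 * auxCnt g h π π' := by
  have hrw : (∑ a, ∑ b, (auxMat g a b - auxMat h (π a) (π' b)) ^ 2)
      = ∑ p : Fin k × Fin k, (auxMat g p.1 p.2 - auxMat h (π p.1) (π' p.2)) ^ 2 :=
    (Fintype.sum_prod_type (fun p : Fin k × Fin k =>
      (auxMat g p.1 p.2 - auxMat h (π p.1) (π' p.2)) ^ 2)).symm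
  rw [hrw]
  have hpt : ∀ p : Fin k × Fin k,
      (auxMat g p.1 p.2 - auxMat h (π p.1) (π' p.2)) ^ 2
        = if g s(p.1, p.2) ≠ h s(π p.1, π' p.2) then (4:ℝ) else 0 := by
    intro p
    unfold auxMat
    simp only [Matrix.of_apply]
    by_cases h1 : g s(p.1, p.2) <;> by_cases h2 : h s(π p.1, π' p.2) <;> simp [h1, h2] <;> norm_num
  calc ∑ p : Fin k × Fin k, (auxMat g p.1 p.2 - auxMat h (π p.1) (π' p.2)) ^ 2
      = ∑ p : Fin k × Fin k, if g s(p.1, p.2) ≠ h s(π p.1, π' p.2) then (4:ℝ) else 0 := by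
        exact Finset.sum_congr rfl (fun p _ => hpt p)
    _ = 4 * auxCnt g h π π' := by
        rw [Finset.sum_ite, Finset.sum_const, Finset.sum_const]
        unfold auxCnt
        simp [mul_comm]



/-- The symmetrized reference function for a permuted center. -/
noncomputable def auxG (c : Sym2 (Fin k) → Bool) (π π' : Equiv.Perm (Fin k)) : Sym2 (Fin k) → Bool :=
  fun e => c s(π e.out.1, π' e.out.2)

lemma auxHam_le_cnt (g c : Sym2 (Fin k) → Bool) (π π' : Equiv.Perm (Fin k)) :
    ((univ : Finset (Sym2 (Fin k))).filter (fun e => g e ≠ auxG c π π' e)).card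
      ≤ auxCnt g c π π' := by
  unfold auxCnt
  apply Finset.card_le_card_of_injOn (fun e => e.out)
  · intro e he
    simp only [coe_filter, Set.mem_setOf_eq, mem_filter, mem_univ, true_and] at he ⊢
    have h1 : s(e.out.1, e.out.2) = e := by
      rw [Sym2.mk]
      exact e.out_eq
    rw [h1]
    exact he
  · intro e₁ _ e₂ _ h
    calc e₁ = Quot.mk _ e₁.out := e₁.out_eq.symm
      _ = Quot.mk _ e₂.out := congrArg (Quot.mk _) h
      _ = e₂ := e₂.out_eq


lemma aux_log3 : (13 : ℝ) / 12 ≤ Real.log 3 := by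
  rw [Real.le_log_iff_exp_le (by norm_num : (0:ℝ) < 3)]
  have h1 : Real.exp (13/12 : ℝ) = Real.exp 1 * Real.exp (1/12) := by
    rw [← Real.exp_add]; norm_num
  have h2 : Real.exp (1/12 : ℝ) ≤ 12/11 := by
    have := Real.add_one_le_exp (-(1/12) : ℝ)
    have hpos := Real.exp_pos (1/12 : ℝ)
    rw [Real.exp_neg] at this
    rw [show (-(1/12) + 1 : ℝ) = 11/12 by norm_num] at this
    calc Real.exp (1/12 : ℝ) = (Real.exp (1/12))⁻¹⁻¹ := by rw [inv_inv]
      _ ≤ (11/12 : ℝ)⁻¹ := by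
          apply inv_anti₀ (by norm_num) this
      _ = 12/11 := by norm_num
  have h3 := Real.exp_one_lt_d9.le
  rw [h1]
  calc Real.exp 1 * Real.exp (1/12) ≤ 2.7182818286 * (12/11) := by
        apply mul_le_mul h3 h2 (Real.exp_pos _).le (by norm_num)
    _ ≤ 3 := by norm_num

lemma aux_final (k N : ℕ) (hk : 32768 ≤ k) (hN : (k:ℝ)^2 ≤ 2*N) :
    (k:ℝ)^2/32 ≤ (N:ℝ)*Real.log 2 - 2*((k:ℝ)*Real.log k)
      - ((N:ℝ)*Real.log (4/3) + ((N:ℝ)/4)*Real.log 3) := by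
  have hk0 : (0:ℝ) < k := by
    have : (32768:ℝ) ≤ k := by exact_mod_cast hk
    linarith
  have hk' : (22500:ℝ) ≤ k := by
    have : (32768:ℝ) ≤ k := by exact_mod_cast hk
    linarith
  have hL2 : Real.log 2 < 0.6931471808 := Real.log_two_lt_d9
  have hL2pos : (0:ℝ) < Real.log 2 := Real.log_pos (by norm_num)
  have hL3 : (13 : ℝ)/12 ≤ Real.log 3 := aux_log3
  have hlog43 : Real.log (4/3 : ℝ) = 2 * Real.log 2 - Real.log 3 := by
    rw [Real.log_div (by norm_num) (by norm_num),
      show (4:ℝ) = 2^2 by norm_num, Real.log_pow]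
    push_cast; ring
  -- log k ≤ 2 * sqrt k
  have hsq : Real.sqrt k * Real.sqrt k = (k:ℝ) := Real.mul_self_sqrt hk0.le
  have hsqpos : (0:ℝ) < Real.sqrt k := Real.sqrt_pos.2 hk0
  have hlogk : Real.log k ≤ 2 * Real.sqrt k := by
    have h1 : Real.log (Real.sqrt k) ≤ Real.sqrt k - 1 :=
      Real.log_le_sub_one_of_pos hsqpos
    have h2 : Real.log (Real.sqrt k) = Real.log k / 2 := Real.log_sqrt hk0.le
    linarith
  have hsqle : Real.sqrt k ≤ (k:ℝ)/150 := by
    have h150 : (150:ℝ) ≤ Real.sqrt k := by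
      rw [show (150:ℝ) = Real.sqrt (150^2) by
        rw [Real.sqrt_sq (by norm_num)]]
      exact Real.sqrt_le_sqrt (by norm_num; linarith)
    nlinarith
  have hNnn : (0:ℝ) ≤ (N:ℝ) := Nat.cast_nonneg N
  have hlogknn : (0:ℝ) ≤ Real.log k := Real.log_nonneg (by linarith)
  -- main estimate
  have key : (N:ℝ)*Real.log 2 - ((N:ℝ)*Real.log (4/3) + ((N:ℝ)/4)*Real.log 3)
      = (N:ℝ) * ((3/4)*Real.log 3 - Real.log 2) := by
    rw [hlog43]; ring
  rw [show (N:ℝ)*Real.log 2 - 2*((k:ℝ)*Real.log k)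
      - ((N:ℝ)*Real.log (4/3) + ((N:ℝ)/4)*Real.log 3)
      = ((N:ℝ)*Real.log 2 - ((N:ℝ)*Real.log (4/3) + ((N:ℝ)/4)*Real.log 3))
        - 2*((k:ℝ)*Real.log k) by ring, key]
  have hA : (119/1000 : ℝ) ≤ (3/4)*Real.log 3 - Real.log 2 := by nlinarith
  have h1 : (k:ℝ)^2/2 * (119/1000) ≤ (N:ℝ) * ((3/4)*Real.log 3 - Real.log 2) := by
    apply mul_le_mul (by linarith) hA (by norm_num) hNnn
  have h2 : 2*((k:ℝ)*Real.log k) ≤ 4*((k:ℝ)* Real.sqrt k) := by nlinarith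
  have h3 : 4*((k:ℝ)* Real.sqrt k) ≤ 4*((k:ℝ)^2/150) := by nlinarith
  nlinarith

/-- Packing of symmetric ±1 matrices separated in Frobenius norm under all
simultaneous row/column permutations. -/
theorem stmt_7 :
    ∃ k₀ : ℕ, ∀ k : ℕ, k₀ ≤ k →
      ∃ C : Finset (Matrix (Fin k) (Fin k) ℝ),
        (∀ B ∈ C, B.IsSymm ∧ ∀ a b, B a b = 1 ∨ B a b = -1) ∧
        (k : ℝ) ^ 2 / 32 ≤ Real.log (C.card : ℝ) ∧
        ∀ B₁ ∈ C, ∀ B₂ ∈ C, B₁ ≠ B₂ → ∀ π π' : Equiv.Perm (Fin k),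
          (k : ℝ) ^ 2 / 2 ≤ ∑ a, ∑ b, (B₁ a b - B₂ (π a) (π' b)) ^ 2 := by
  classical
  refine ⟨32768, fun k hk => ?_⟩
  have hkpos : 0 < k := by omega
  set N := Fintype.card (Sym2 (Fin k)) with hNdef
  have hN2 : k ^ 2 ≤ 2 * N := by
    have h1 : N = (k + 1).choose 2 := by
      rw [hNdef, Sym2.card, Fintype.card_fin]
    have h3 : 2 ∣ (k + 1) * k := by
      rcases Nat.even_or_odd k with h | h
      · exact Dvd.dvd.mul_left h.two_dvd _
      · exact Dvd.dvd.mul_right (h.add_one).two_dvd _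
    rw [h1, Nat.choose_two_right, show k + 1 - 1 = k from rfl, Nat.mul_div_cancel' h3] at *
    nlinarith
  -- maximal packing among boolean functions on unordered pairs
  set 𝒜 := (univ : Finset (Finset (Sym2 (Fin k) → Bool))).filter
    (fun C => ∀ g ∈ C, ∀ h ∈ C, g ≠ h →
      ∀ π π' : Equiv.Perm (Fin k), k ^ 2 ≤ 8 * auxCnt g h π π') with h𝒜
  have hempty : (∅ : Finset (Sym2 (Fin k) → Bool)) ∈ 𝒜 := by simp [h𝒜]
  obtain ⟨C, hC, hmax⟩ := Finset.exists_max_image 𝒜 Finset.card ⟨∅, hempty⟩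
  have hCfar : ∀ g ∈ C, ∀ h ∈ C, g ≠ h →
      ∀ π π' : Equiv.Perm (Fin k), k ^ 2 ≤ 8 * auxCnt g h π π' :=
    (Finset.mem_filter.mp hC).2
  -- covering property from maximality
  have hcov : ∀ g : Sym2 (Fin k) → Bool, ∃ c ∈ C,
      ∃ π π' : Equiv.Perm (Fin k), 8 * auxCnt g c π π' < k ^ 2 := by
    intro g
    by_contra hcon
    push_neg at hcon
    have hk2pos : 0 < k ^ 2 := pow_pos hkpos 2
    have hgC : g ∉ C := by
      intro hg
      have h0 := hcon g hg 1 1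
      have hzero : auxCnt g g 1 1 = 0 := by
        unfold auxCnt
        rw [Finset.card_eq_zero]
        ext p; simp
      omega
    have hins : insert g C ∈ 𝒜 := by
      simp only [h𝒜, Finset.mem_filter, Finset.mem_univ, true_and]
      intro a ha b hb hab π π'
      rcases Finset.mem_insert.mp ha with ha' | ha' <;>
        rcases Finset.mem_insert.mp hb with hb' | hb'
      · exact absurd (ha'.trans hb'.symm) hab
      · subst ha'; exact hcon b hb' π π'
      · subst hb'; rw [auxCnt_comm a b π π']; exact hcon a ha' π⁻¹ π'⁻¹
      · exact hCfar a ha' b hb' hab π π'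
    have hcard := hmax _ hins
    rw [Finset.card_insert_of_notMem hgC] at hcard
    omega
  -- counting
  set r := (k ^ 2 - 1) / 8 with hrdef
  set S := ∑ i ∈ range (r + 1), N.choose i with hSdef
  have hball : ∀ c : Sym2 (Fin k) → Bool,
      ((univ : Finset (Sym2 (Fin k) → Bool)).filter
        (fun g => ∃ π π' : Equiv.Perm (Fin k), 8 * auxCnt g c π π' < k ^ 2)).card
        ≤ (k.factorial) ^ 2 * S := by
    intro c
    have hsub : ((univ : Finset (Sym2 (Fin k) → Bool)).filter
        (fun g => ∃ π π' : Equiv.Perm (Fin k), 8 * auxCnt g c π π' < k ^ 2)) ⊆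
        (univ : Finset (Equiv.Perm (Fin k) × Equiv.Perm (Fin k))).biUnion
          (fun q => (univ : Finset (Sym2 (Fin k) → Bool)).filter
            (fun g => ((univ : Finset (Sym2 (Fin k))).filter
              (fun e => g e ≠ auxG c q.1 q.2 e)).card ≤ r)) := by
      intro g hg
      simp only [Finset.mem_filter, Finset.mem_univ, true_and] at hg
      obtain ⟨π, π', hlt⟩ := hg
      have h1 : auxCnt g c π π' ≤ r := by
        rw [hrdef, Nat.le_div_iff_mul_le (by norm_num : 0 < 8)]
        omega
      refine Finset.mem_biUnion.2 ⟨(π, π'), Finset.mem_univ _, ?_⟩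
      simp only [Finset.mem_filter, Finset.mem_univ, true_and]
      exact le_trans (auxHam_le_cnt g c π π') h1
    calc ((univ : Finset (Sym2 (Fin k) → Bool)).filter
        (fun g => ∃ π π' : Equiv.Perm (Fin k), 8 * auxCnt g c π π' < k ^ 2)).card
        ≤ _ := Finset.card_le_card hsub
      _ ≤ ∑ q : Equiv.Perm (Fin k) × Equiv.Perm (Fin k),
            ((univ : Finset (Sym2 (Fin k) → Bool)).filter
            (fun g => ((univ : Finset (Sym2 (Fin k))).filter
              (fun e => g e ≠ auxG c q.1 q.2 e)).card ≤ r)).card :=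
          Finset.card_biUnion_le
      _ ≤ ∑ _q : Equiv.Perm (Fin k) × Equiv.Perm (Fin k), S := by
          refine Finset.sum_le_sum (fun q _ => ?_)
          simpa [hSdef, hNdef] using aux_ball_card (auxG c q.1 q.2) r
      _ = (k.factorial) ^ 2 * S := by
          rw [Finset.sum_const, Finset.card_univ, Fintype.card_prod,
            Fintype.card_perm, Fintype.card_fin, smul_eq_mul, sq]
  have hcount : 2 ^ N ≤ C.card * ((k.factorial) ^ 2 * S) := by
    have huniv : (univ : Finset (Sym2 (Fin k) → Bool)) ⊆
        C.biUnion (fun c => (univ : Finset (Sym2 (Fin k) → Bool)).filter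
          (fun g => ∃ π π' : Equiv.Perm (Fin k), 8 * auxCnt g c π π' < k ^ 2)) := by
      intro g _
      obtain ⟨c, hc, π, π', h⟩ := hcov g
      exact Finset.mem_biUnion.2 ⟨c, hc, by
        simp only [Finset.mem_filter, Finset.mem_univ, true_and]
        exact ⟨π, π', h⟩⟩
    calc 2 ^ N = (univ : Finset (Sym2 (Fin k) → Bool)).card := by
          rw [Finset.card_univ, Fintype.card_fun, Fintype.card_bool]
      _ ≤ (C.biUnion (fun c => (univ : Finset (Sym2 (Fin k) → Bool)).filter
          (fun g => ∃ π π' : Equiv.Perm (Fin k), 8 * auxCnt g c π π' < k ^ 2))).card :=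
          Finset.card_le_card huniv
      _ ≤ ∑ c ∈ C, ((univ : Finset (Sym2 (Fin k) → Bool)).filter
          (fun g => ∃ π π' : Equiv.Perm (Fin k), 8 * auxCnt g c π π' < k ^ 2)).card :=
          Finset.card_biUnion_le
      _ ≤ ∑ _c ∈ C, (k.factorial) ^ 2 * S :=
          Finset.sum_le_sum (fun c _ => hball c)
      _ = C.card * ((k.factorial) ^ 2 * S) := by
          rw [Finset.sum_const, smul_eq_mul]
  -- pass to the reals and take logarithms
  have hr4 : (r : ℝ) ≤ (N : ℝ) / 4 := by
    have h8r : 8 * r ≤ k ^ 2 := by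
      have := Nat.div_mul_le_self (k ^ 2 - 1) 8
      omega
    have h2 : 8 * r ≤ 2 * N := le_trans h8r hN2
    have h3 : (8 : ℝ) * r ≤ 2 * N := by exact_mod_cast h2
    linarith
  have hSV : (S : ℝ) ≤ (4 / 3) ^ N * (3 : ℝ) ^ ((N : ℝ) / 4) := by
    calc (S : ℝ) = ∑ i ∈ range (r + 1), ((N.choose i : ℝ)) := by
          rw [hSdef]; push_cast; ring
      _ ≤ _ := aux_binom_sum N r hr4
  have hCpos : 0 < C.card := by
    rcases Nat.eq_zero_or_pos C.card with h | h
    · rw [h, zero_mul] at hcount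
      exact absurd hcount (by positivity : 0 < 2 ^ N).not_ge
    · exact h
  set V := (4 / 3 : ℝ) ^ N * (3 : ℝ) ^ ((N : ℝ) / 4) with hVdef
  have hVpos : 0 < V := by rw [hVdef]; positivity
  have hreal : (2 : ℝ) ^ N ≤ (C.card : ℝ) * ((k.factorial : ℝ) ^ 2 * V) := by
    calc (2 : ℝ) ^ N = ((2 ^ N : ℕ) : ℝ) := by push_cast; ring
      _ ≤ ((C.card * ((k.factorial) ^ 2 * S) : ℕ) : ℝ) := Nat.cast_le.2 hcount
      _ = (C.card : ℝ) * ((k.factorial : ℝ) ^ 2 * (S : ℝ)) := by push_cast; ring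
      _ ≤ (C.card : ℝ) * ((k.factorial : ℝ) ^ 2 * V) := by
          apply mul_le_mul_of_nonneg_left _ (Nat.cast_nonneg _)
          exact mul_le_mul_of_nonneg_left hSV (by positivity)
  have hlogfac : Real.log (k.factorial : ℝ) ≤ (k : ℝ) * Real.log k := by
    calc Real.log (k.factorial : ℝ) ≤ Real.log ((k : ℝ) ^ k) := by
          apply Real.log_le_log (by exact_mod_cast k.factorial_pos)
          exact_mod_cast Nat.factorial_le_pow k
      _ = (k : ℝ) * Real.log k := by rw [Real.log_pow]
  have hlogchain : (N : ℝ) * Real.log 2 ≤ Real.log (C.card : ℝ)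
      + 2 * ((k : ℝ) * Real.log k)
      + ((N : ℝ) * Real.log (4 / 3) + ((N : ℝ) / 4) * Real.log 3) := by
    have h1 : Real.log ((2 : ℝ) ^ N) ≤
        Real.log ((C.card : ℝ) * ((k.factorial : ℝ) ^ 2 * V)) :=
      Real.log_le_log (by positivity) hreal
    rw [Real.log_pow] at h1
    have hfacpos : (0 : ℝ) < (k.factorial : ℝ) := by exact_mod_cast k.factorial_pos
    have hCr : (0 : ℝ) < (C.card : ℝ) := by exact_mod_cast hCpos
    rw [Real.log_mul (by positivity) (by positivity),
      Real.log_mul (by positivity) (by positivity), hVdef,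
      Real.log_mul (by positivity) (by positivity),
      Real.log_pow, Real.log_pow, Real.log_rpow (by norm_num : (0:ℝ) < 3)] at h1
    push_cast at h1 ⊢
    nlinarith [hlogfac, Real.log_nonneg (Nat.one_le_cast.mpr hkpos)]
  have hN2' : (k : ℝ) ^ 2 ≤ 2 * (N : ℝ) := by exact_mod_cast hN2
  have hfinal := aux_final k N hk hN2'
  have hlogC : (k : ℝ) ^ 2 / 32 ≤ Real.log (C.card : ℝ) := by linarith
  -- construct the matrix family
  refine ⟨C.image auxMat, ?_, ?_, ?_⟩
  · intro B hB
    obtain ⟨g, _, rfl⟩ := Finset.mem_image.mp hB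
    exact ⟨auxMat_symm g, auxMat_pm g⟩
  · rw [Finset.card_image_of_injective C auxMat_inj]
    exact hlogC
  · intro B₁ hB₁ B₂ hB₂ hne π π'
    obtain ⟨g₁, hg₁, rfl⟩ := Finset.mem_image.mp hB₁
    obtain ⟨g₂, hg₂, rfl⟩ := Finset.mem_image.mp hB₂
    have hgne : g₁ ≠ g₂ := fun h => hne (by rw [h])
    have hfar := hCfar g₁ hg₁ g₂ hg₂ hgne π π'
    rw [auxSum_eq]
    have : (k : ℝ) ^ 2 ≤ 8 * (auxCnt g₁ g₂ π π' : ℝ) := by exact_mod_cast hfar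
    linarith
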